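/- Let V be a finite-dimensional vector space over a field K of characteristic 0 with dim V ≥ 2. Then there exist at most 3 mutually adjacent Leonard pairs on V. -/

import Mathlib

open Module

/-- A square matrix is diagonal. -/
def Matrix.IsDiag' {K : Type*} [Zero K] {n : ℕ} (M : Matrix (Fin n) (Fin n) K) : Prop :=
  ∀ i j, i ≠ j → M i j = 0

/-- A square matrix is irreducible tridiagonal: entries are zero off the three central
diagonals, and all subdiagonal and superdiagonal entries are nonzero. -/
def Matrix.IsIrredTridiag {K : Type*} [Zero K] {n : ℕ} (M : Matrix (Fin n) (Fin n) K) : Prop :=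
  (∀ i j : Fin n, ((i : ℕ) + 1 < (j : ℕ) ∨ (j : ℕ) + 1 < (i : ℕ)) → M i j = 0) ∧
  (∀ i j : Fin n, ((i : ℕ) + 1 = (j : ℕ) ∨ (j : ℕ) + 1 = (i : ℕ)) → M i j ≠ 0)

/-- A square matrix is lower bidiagonal. -/
def Matrix.IsLowerBidiag {K : Type*} [Zero K] {n : ℕ} (M : Matrix (Fin n) (Fin n) K) : Prop :=
  ∀ i j : Fin n, ¬(i = j ∨ (j : ℕ) + 1 = (i : ℕ)) → M i j = 0

/-- A square matrix is upper bidiagonal. -/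
def Matrix.IsUpperBidiag {K : Type*} [Zero K] {n : ℕ} (M : Matrix (Fin n) (Fin n) K) : Prop :=
  ∀ i j : Fin n, ¬(i = j ∨ (i : ℕ) + 1 = (j : ℕ)) → M i j = 0

variable {K V : Type*} [Field K] [AddCommGroup V] [Module K V] [FiniteDimensional K V]

/-- `b` is an `A`-standard basis for the pair `(A, A*)`: the matrix of `A` is diagonal
and the matrix of `A*` is irreducible tridiagonal. -/
def IsAStandardBasis (A Astar : Module.End K V)
    (b : Basis (Fin (finrank K V)) K V) : Prop :=
  (LinearMap.toMatrix b b A).IsDiag' ∧ (LinearMap.toMatrix b b Astar).IsIrredTridiag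

/-- `(A, A*)` is a Leonard pair on `V`. -/
def IsLeonardPair (A Astar : Module.End K V) : Prop :=
  (∃ b : Basis (Fin (finrank K V)) K V, IsAStandardBasis A Astar b) ∧
  (∃ b : Basis (Fin (finrank K V)) K V, IsAStandardBasis Astar A b)

/-- A basis is standard for `(A, A*)` whenever it is `A`-standard or `A*`-standard. -/
def IsStandardBasis (A Astar : Module.End K V)
    (b : Basis (Fin (finrank K V)) K V) : Prop :=
  IsAStandardBasis A Astar b ∨ IsAStandardBasis Astar A b

/-- A basis is split for `(A, A*)` whenever with respect to it one of `A, A*` is lower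
bidiagonal and the other is upper bidiagonal. -/
def IsSplitBasis (A Astar : Module.End K V)
    (b : Basis (Fin (finrank K V)) K V) : Prop :=
  ((LinearMap.toMatrix b b A).IsLowerBidiag ∧ (LinearMap.toMatrix b b Astar).IsUpperBidiag) ∨
  ((LinearMap.toMatrix b b A).IsUpperBidiag ∧ (LinearMap.toMatrix b b Astar).IsLowerBidiag)

/-- Two Leonard pairs are adjacent whenever each standard basis for one is split for
the other. -/
def LPAdjacent (P Q : Module.End K V × Module.End K V) : Prop :=
  (∀ b : Basis (Fin (finrank K V)) K V, IsStandardBasis P.1 P.2 b → IsSplitBasis Q.1 Q.2 b) ∧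
  (∀ b : Basis (Fin (finrank K V)) K V, IsStandardBasis Q.1 Q.2 b → IsSplitBasis P.1 P.2 b)

/-- The flag induced by a basis, `Fᵢ = span(b₀) + ⋯ + span(bᵢ)`. -/
def flagOfBasis (b : Basis (Fin (finrank K V)) K V) (i : Fin (finrank K V)) :
    Submodule K V :=
  ⨆ k ≤ i, K ∙ b k

/-- An `A`-standard flag: one induced by (the decomposition induced by) an
`A`-standard basis. -/
def IsAStandardFlag (A Astar : Module.End K V)
    (F : Fin (finrank K V) → Submodule K V) : Prop :=
  ∃ b : Basis (Fin (finrank K V)) K V, IsAStandardBasis A Astar b ∧ F = flagOfBasis b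

/-- A standard decomposition for `(A, A*)`: the decomposition induced by a
standard basis. -/
def IsStandardDecomp (A Astar : Module.End K V)
    (W : Fin (finrank K V) → Submodule K V) : Prop :=
  ∃ b : Basis (Fin (finrank K V)) K V, IsStandardBasis A Astar b ∧ ∀ i, W i = K ∙ b i

set_option linter.unusedSectionVars false

lemma LPaux.apply_basis_eq_sum (b : Basis (Fin (finrank K V)) K V) (f : Module.End K V)
    (j : Fin (finrank K V)) :
    f (b j) = ∑ i, (LinearMap.toMatrix b b f) i j • b i := by
  conv_lhs => rw [← b.sum_repr (f (b j))]
  exact Finset.sum_congr rfl fun i _ => by rw [LinearMap.toMatrix_apply]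

lemma LPaux.diag_apply {b : Basis (Fin (finrank K V)) K V} {f : Module.End K V}
    (h : (LinearMap.toMatrix b b f).IsDiag') (j : Fin (finrank K V)) :
    f (b j) = (LinearMap.toMatrix b b f) j j • b j := by
  rw [LPaux.apply_basis_eq_sum b f j]
  rw [Finset.sum_eq_single j]
  · intro i _ hij
    rw [h i j hij, zero_smul]
  · intro h'; exact absurd (Finset.mem_univ j) h'

lemma LPaux.eigen_coord (b : Basis (Fin (finrank K V)) K V) (f : Module.End K V)
    {v : V} {μ : K} (hv : f v = μ • v) (k : Fin (finrank K V)) :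
    ∑ j, (LinearMap.toMatrix b b f) k j * b.repr v j = μ * b.repr v k := by
  have h := congrFun (LinearMap.toMatrix_mulVec_repr b b f v) k
  rw [hv] at h
  simpa [Matrix.mulVec, dotProduct] using h

lemma LPaux.eigen_zero_of_repr_zero (b : Basis (Fin (finrank K V)) K V) (f : Module.End K V)
    (hT : (LinearMap.toMatrix b b f).IsIrredTridiag)
    {v : V} {μ : K} (hv : f v = μ • v) (hn : 0 < finrank K V)
    (h0 : b.repr v ⟨0, hn⟩ = 0) : v = 0 := by
  set T := LinearMap.toMatrix b b f with hTdef
  have key : ∀ m : ℕ, ∀ hm : m < finrank K V, b.repr v ⟨m, hm⟩ = 0 := by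
    intro m
    induction m using Nat.strong_induction_on with
    | _ m IH =>
      intro hm
      match m, hm with
      | 0, hm => exact h0
      | (mm+1), hm =>
        have hmm : mm < finrank K V := by omega
        have row := LPaux.eigen_coord b f hv ⟨mm, hmm⟩
        rw [IH mm (by omega) hmm, mul_zero] at row
        have hsingle : ∀ j : Fin (finrank K V), j ≠ ⟨mm+1, hm⟩ →
            T ⟨mm, hmm⟩ j * b.repr v j = 0 := by
          intro j hjne
          rcases lt_trichotomy (j : ℕ) (mm+1) with h | h | h
          · have hj0 : b.repr v j = 0 := by
              have := IH (j : ℕ) (by omega) j.2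
              simpa using this
            rw [hj0, mul_zero]
          · exact absurd (Fin.ext h) hjne
          · rw [hT.1 ⟨mm, hmm⟩ j (Or.inl (by simpa using h)), zero_mul]
        rw [Finset.sum_eq_single (⟨mm+1, hm⟩ : Fin (finrank K V))
          (fun j _ hj => hsingle j hj) (fun h' => absurd (Finset.mem_univ _) h')] at row
        have hTne := hT.2 ⟨mm, hmm⟩ ⟨mm+1, hm⟩ (Or.inl rfl)
        exact (mul_eq_zero.mp row).resolve_left hTne
  have : b.repr v = 0 := by
    ext j
    have := key (j : ℕ) j.2
    simpa using this
  simpa using congrArg (b.repr.symm) this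

lemma LPaux.diag_injective {A As : Module.End K V} (hLP : IsLeonardPair A As)
    {b : Basis (Fin (finrank K V)) K V} (hb : IsAStandardBasis A As b)
    {i j : Fin (finrank K V)} (hij : (LinearMap.toMatrix b b A) i i = (LinearMap.toMatrix b b A) j j) :
    i = j := by
  by_contra hne
  obtain ⟨b2, hb2⟩ := hLP.2
  have hT : (LinearMap.toMatrix b2 b2 A).IsIrredTridiag := hb2.2
  have hpos : 0 < finrank K V := i.pos
  set z : Fin (finrank K V) := ⟨0, hpos⟩ with hz
  set μ := (LinearMap.toMatrix b b A) i i with hμ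
  have hvi : A (b i) = μ • b i := LPaux.diag_apply hb.1 i
  have hvj : A (b j) = μ • b j := by rw [LPaux.diag_apply hb.1 j, ← hij]
  set c1 : K := b2.repr (b i) z with hc1
  set c2 : K := b2.repr (b j) z with hc2
  set w : V := c2 • (b i) - c1 • (b j) with hw
  have hweig : A w = μ • w := by
    rw [hw, map_sub, map_smul, map_smul, hvi, hvj, smul_sub, smul_comm c2 μ, smul_comm c1 μ]
  have hw0 : b2.repr w z = 0 := by
    rw [hw, map_sub, map_smul, map_smul]
    simp [← hc1, ← hc2, mul_comm]
  have hwz : w = 0 := LPaux.eigen_zero_of_repr_zero b2 A hT hweig hpos hw0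
  have heq : c2 • (b i) = c1 • (b j) := by
    have := sub_eq_zero.mp (hw ▸ hwz)
    exact this
  have h1 : c2 = 0 := by
    have h2 := congrArg (fun t => b.repr t i) heq
    simp only [map_smul, Finsupp.smul_apply, Basis.repr_self, smul_eq_mul,
      Finsupp.single_apply, if_pos rfl, if_neg (fun h : j = i => hne h.symm),
      mul_one, mul_zero] at h2
    simpa using h2
  have hbj : b j = 0 := LPaux.eigen_zero_of_repr_zero b2 A hT hvj hpos (by rw [← hc2, h1])
  exact b.ne_zero j hbj

lemma LPaux.pow_mem {A : Module.End K V} {W : Submodule K V}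
    (hAW : ∀ w ∈ W, A w ∈ W) (m : ℕ) {w : V} (hw : w ∈ W) : (A ^ m) w ∈ W := by
  induction m generalizing w with
  | zero => simpa using hw
  | succ m IH =>
    rw [pow_succ, Module.End.mul_apply]
    exact IH (hAW w hw)

lemma LPaux.aeval_mem {A : Module.End K V} {W : Submodule K V}
    (hAW : ∀ w ∈ W, A w ∈ W) (q : Polynomial K) {w : V} (hw : w ∈ W) :
    (Polynomial.aeval A q) w ∈ W := by
  induction q using Polynomial.induction_on' with
  | add p q hp hq =>
    rw [map_add, LinearMap.add_apply]
    exact W.add_mem hp hq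
  | monomial n a =>
    rw [Polynomial.aeval_monomial, Module.End.mul_apply]
    have h1 : (A ^ n) w ∈ W := LPaux.pow_mem hAW n hw
    have h2 : (algebraMap K (Module.End K V) a) ((A ^ n) w) = a • ((A ^ n) w) := rfl
    rw [h2]
    exact W.smul_mem a h1

lemma LPaux.component_mem {A As : Module.End K V} (hLP : IsLeonardPair A As)
    {b : Basis (Fin (finrank K V)) K V} (hb : IsAStandardBasis A As b)
    {W : Submodule K V} (hAW : ∀ w ∈ W, A w ∈ W) {w : V} (hw : w ∈ W)
    (i : Fin (finrank K V)) : (b.repr w i) • b i ∈ W := by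
  classical
  set D := LinearMap.toMatrix b b A with hD
  set q : Polynomial K := ∏ k ∈ Finset.univ.erase i, (Polynomial.X - Polynomial.C (D k k)) with hq
  set E : Module.End K V := Polynomial.aeval A q with hE
  set ci : K := ∏ k ∈ Finset.univ.erase i, (D i i - D k k) with hci
  have hcine : ci ≠ 0 := by
    rw [hci]
    apply Finset.prod_ne_zero_iff.mpr
    intro k hk
    have hki : k ≠ i := (Finset.mem_erase.mp hk).1
    intro hzero
    exact hki (LPaux.diag_injective hLP hb (sub_eq_zero.mp hzero).symm)
  have heval : ∀ j : Fin (finrank K V),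
      E (b j) = (∏ k ∈ Finset.univ.erase i, (D j j - D k k)) • b j := by
    intro j
    rw [hE, Module.End.aeval_apply_of_hasEigenvector
      ⟨Module.End.mem_eigenspace_iff.mpr (LPaux.diag_apply hb.1 j), b.ne_zero j⟩,
      hq, Polynomial.eval_prod]
    simp [hD]
  have hEw : E w = (ci * b.repr w i) • b i := by
    conv_lhs => rw [← b.sum_repr w, map_sum]
    rw [Finset.sum_eq_single i]
    · rw [map_smul, heval i, ← hci, smul_smul, mul_comm]
    · intro j _ hji
      rw [map_smul, heval j]
      have hz : (∏ k ∈ Finset.univ.erase i, (D j j - D k k)) = 0 :=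
        Finset.prod_eq_zero (Finset.mem_erase.mpr ⟨hji, Finset.mem_univ j⟩) (sub_self (D j j))
      rw [hz]
      simp
    · intro h'; exact absurd (Finset.mem_univ i) h'
  have hEmem : E w ∈ W := LPaux.aeval_mem hAW q hw
  have h3 : (ci⁻¹ * (ci * b.repr w i)) • b i ∈ W := by
    rw [← smul_smul, ← hEw]
    exact W.smul_mem _ hEmem
  rwa [← mul_assoc, inv_mul_cancel₀ hcine, one_mul] at h3

lemma LPaux.invariant_trivial {A As : Module.End K V} (hLP : IsLeonardPair A As)
    {W : Submodule K V} (hA : ∀ w ∈ W, A w ∈ W) (hAs : ∀ w ∈ W, As w ∈ W) :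
    W = ⊥ ∨ W = ⊤ := by
  classical
  obtain ⟨b, hb⟩ := hLP.1
  by_cases hbot : W = ⊥
  · exact Or.inl hbot
  right
  obtain ⟨w, hwW, hw0⟩ := Submodule.exists_mem_ne_zero_of_ne_bot hbot
  have hex : ∃ i, b.repr w i ≠ 0 := by
    by_contra hcon
    push_neg at hcon
    apply hw0
    have h4 : b.repr w = 0 := by ext j; exact hcon j
    simpa using congrArg b.repr.symm h4
  obtain ⟨i, hi⟩ := hex
  have hbi : b i ∈ W := by
    have h1 := LPaux.component_mem hLP hb hA hwW i
    have h2 := W.smul_mem (b.repr w i)⁻¹ h1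
    rwa [smul_smul, inv_mul_cancel₀ hi, one_smul] at h2
  have hT := hb.2
  have step : ∀ j : Fin (finrank K V), b j ∈ W → ∀ k : Fin (finrank K V),
      ((j : ℕ) + 1 = (k : ℕ) ∨ (k : ℕ) + 1 = (j : ℕ)) → b k ∈ W := by
    intro j hj k hk
    have h1 : As (b j) ∈ W := hAs _ hj
    have h2 := LPaux.component_mem hLP hb hA h1 k
    have h3 : b.repr (As (b j)) k = (LinearMap.toMatrix b b As) k j :=
      (LinearMap.toMatrix_apply b b As k j).symm
    have h4 : (LinearMap.toMatrix b b As) k j ≠ 0 := by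
      apply hT.2 k j
      rcases hk with h | h
      · exact Or.inr h
      · exact Or.inl h
    rw [h3] at h2
    have h5 := W.smul_mem ((LinearMap.toMatrix b b As) k j)⁻¹ h2
    rwa [smul_smul, inv_mul_cancel₀ h4, one_smul] at h5
  have hdown : ∀ t : ℕ, ∀ ht : t ≤ (i : ℕ), b ⟨(i : ℕ) - t, by omega⟩ ∈ W := by
    intro t
    induction t with
    | zero => intro _; simpa using hbi
    | succ t IH =>
      intro ht
      refine step ⟨(i : ℕ) - t, by omega⟩ (IH (by omega)) _ (Or.inr ?_)
      show ((i : ℕ) - (t+1)) + 1 = (i : ℕ) - t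
      omega
  have h0 : b ⟨0, i.pos⟩ ∈ W := by
    have h6 := hdown (i : ℕ) le_rfl
    simpa using h6
  have hall : ∀ m : ℕ, ∀ hm : m < finrank K V, b ⟨m, hm⟩ ∈ W := by
    intro m
    induction m with
    | zero => intro hm; exact h0
    | succ m IH =>
      intro hm
      exact step ⟨m, by omega⟩ (IH (by omega)) ⟨m+1, hm⟩ (Or.inl rfl)
  rw [eq_top_iff, ← b.span_eq, Submodule.span_le]
  rintro _ ⟨j, rfl⟩
  have h7 := hall (j : ℕ) j.2
  simpa using h7

/-- In a split basis for a Leonard pair, the subdiagonal entries of the lower-bidiagonal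
member and the superdiagonal entries of the upper-bidiagonal member are all nonzero. -/
lemma LPaux.split_lower_ne_zero {A As : Module.End K V} (hLP : IsLeonardPair A As)
    (u : Basis (Fin (finrank K V)) K V)
    (hA : (LinearMap.toMatrix u u A).IsLowerBidiag)
    (hAs : (LinearMap.toMatrix u u As).IsUpperBidiag)
    (p : Fin (finrank K V)) (hp : (p : ℕ) + 1 < finrank K V) :
    (LinearMap.toMatrix u u A) ⟨(p : ℕ) + 1, hp⟩ p ≠ 0 := by
  intro h0
  set S : Set V := u '' {j : Fin (finrank K V) | (j : ℕ) ≤ (p : ℕ)} with hS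
  set W : Submodule K V := Submodule.span K S with hW
  have hgen : ∀ j : Fin (finrank K V), (j : ℕ) ≤ (p : ℕ) → u j ∈ W := fun j hj =>
    Submodule.subset_span ⟨j, hj, rfl⟩
  have hmemA : ∀ w ∈ W, A w ∈ W := by
    have hle : Submodule.map A W ≤ W := by
      rw [hW, Submodule.map_span_le]
      rintro _ ⟨j, hj, rfl⟩
      have hj2 : (j : ℕ) ≤ (p : ℕ) := hj
      rw [LPaux.apply_basis_eq_sum u A j]
      apply Submodule.sum_mem
      intro k _
      by_cases hk : (LinearMap.toMatrix u u A) k j = 0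
      · rw [hk, zero_smul]; exact W.zero_mem
      · have hor : k = j ∨ (j : ℕ) + 1 = (k : ℕ) := by
          by_contra hcon
          exact hk (hA k j hcon)
        rcases hor with h | h
        · exact W.smul_mem _ (hgen k (by rw [h]; exact hj2))
        · rcases lt_or_eq_of_le hj2 with h' | h'
          · exact W.smul_mem _ (hgen k (by omega))
          · exfalso
            apply hk
            have hjp : j = p := Fin.ext h'
            have hkp : k = ⟨(p : ℕ) + 1, hp⟩ := Fin.ext (show (k : ℕ) = (p : ℕ) + 1 by omega)
            rw [hjp, hkp, h0]
    intro w hw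
    exact hle ⟨w, hw, rfl⟩
  have hmemAs : ∀ w ∈ W, As w ∈ W := by
    have hle : Submodule.map As W ≤ W := by
      rw [hW, Submodule.map_span_le]
      rintro _ ⟨j, hj, rfl⟩
      have hj2 : (j : ℕ) ≤ (p : ℕ) := hj
      rw [LPaux.apply_basis_eq_sum u As j]
      apply Submodule.sum_mem
      intro k _
      by_cases hk : (LinearMap.toMatrix u u As) k j = 0
      · rw [hk, zero_smul]; exact W.zero_mem
      · have hor : k = j ∨ (k : ℕ) + 1 = (j : ℕ) := by
          by_contra hcon
          exact hk (hAs k j hcon)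
        have hkj : (k : ℕ) ≤ (p : ℕ) := by
          rcases hor with h | h
          · have : (k : ℕ) = (j : ℕ) := by rw [h]
            omega
          · omega
        exact W.smul_mem _ (hgen k hkj)
    intro w hw
    exact hle ⟨w, hw, rfl⟩
  rcases LPaux.invariant_trivial hLP hmemA hmemAs with h | h
  · have : u p ∈ (⊥ : Submodule K V) := h ▸ hgen p le_rfl
    exact u.ne_zero p (by simpa using this)
  · set l : Fin (finrank K V) := ⟨finrank K V - 1, by omega⟩ with hl
    have hker : W ≤ LinearMap.ker (u.coord l) := by
      rw [hW, Submodule.span_le]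
      rintro _ ⟨j, hj, rfl⟩
      have hj' : (j : ℕ) ≤ (p : ℕ) := hj
      have hjl : j ≠ l := by
        intro hjl
        rw [hjl] at hj'
        simp only [hl] at hj'
        omega
      simp [Basis.coord_apply, Basis.repr_self, Finsupp.single_apply,
        fun h => hjl (Fin.ext h), hjl]
    have : u l ∈ W := h ▸ Submodule.mem_top
    have h1 := hker this
    simp [Basis.coord_apply, Basis.repr_self] at h1

lemma LPaux.split_upper_ne_zero {A As : Module.End K V} (hLP : IsLeonardPair A As)
    (u : Basis (Fin (finrank K V)) K V)
    (hA : (LinearMap.toMatrix u u A).IsLowerBidiag)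
    (hAs : (LinearMap.toMatrix u u As).IsUpperBidiag)
    (p : Fin (finrank K V)) (hp : (p : ℕ) + 1 < finrank K V) :
    (LinearMap.toMatrix u u As) p ⟨(p : ℕ) + 1, hp⟩ ≠ 0 := by
  intro h0
  set S : Set V := u '' {j : Fin (finrank K V) | (p : ℕ) + 1 ≤ (j : ℕ)} with hS
  set W : Submodule K V := Submodule.span K S with hW
  have hgen : ∀ j : Fin (finrank K V), (p : ℕ) + 1 ≤ (j : ℕ) → u j ∈ W := fun j hj =>
    Submodule.subset_span ⟨j, hj, rfl⟩
  have hmemA : ∀ w ∈ W, A w ∈ W := by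
    have hle : Submodule.map A W ≤ W := by
      rw [hW, Submodule.map_span_le]
      rintro _ ⟨j, hj, rfl⟩
      have hj2 : (p : ℕ) + 1 ≤ (j : ℕ) := hj
      rw [LPaux.apply_basis_eq_sum u A j]
      apply Submodule.sum_mem
      intro k _
      by_cases hk : (LinearMap.toMatrix u u A) k j = 0
      · rw [hk, zero_smul]; exact W.zero_mem
      · have hor : k = j ∨ (j : ℕ) + 1 = (k : ℕ) := by
          by_contra hcon
          exact hk (hA k j hcon)
        have hkj : (p : ℕ) + 1 ≤ (k : ℕ) := by
          rcases hor with h | h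
          · have : (k : ℕ) = (j : ℕ) := by rw [h]
            omega
          · omega
        exact W.smul_mem _ (hgen k hkj)
    intro w hw
    exact hle ⟨w, hw, rfl⟩
  have hmemAs : ∀ w ∈ W, As w ∈ W := by
    have hle : Submodule.map As W ≤ W := by
      rw [hW, Submodule.map_span_le]
      rintro _ ⟨j, hj, rfl⟩
      have hj2 : (p : ℕ) + 1 ≤ (j : ℕ) := hj
      rw [LPaux.apply_basis_eq_sum u As j]
      apply Submodule.sum_mem
      intro k _
      by_cases hk : (LinearMap.toMatrix u u As) k j = 0
      · rw [hk, zero_smul]; exact W.zero_mem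
      · have hor : k = j ∨ (k : ℕ) + 1 = (j : ℕ) := by
          by_contra hcon
          exact hk (hAs k j hcon)
        rcases hor with h | h
        · exact W.smul_mem _ (hgen k (by rw [h]; exact hj2))
        · rcases lt_or_eq_of_le hj2 with h' | h'
          · exact W.smul_mem _ (hgen k (by omega))
          · exfalso
            apply hk
            have hjp : j = ⟨(p : ℕ) + 1, hp⟩ := Fin.ext h'.symm
            have hkp : k = p := Fin.ext (by omega)
            rw [hjp, hkp, h0]
    intro w hw
    exact hle ⟨w, hw, rfl⟩
  rcases LPaux.invariant_trivial hLP hmemA hmemAs with h | h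
  · have : u ⟨(p : ℕ) + 1, hp⟩ ∈ (⊥ : Submodule K V) := h ▸ hgen _ le_rfl
    exact u.ne_zero _ (by simpa using this)
  · set z : Fin (finrank K V) := ⟨0, by omega⟩ with hz
    have hker : W ≤ LinearMap.ker (u.coord z) := by
      rw [hW, Submodule.span_le]
      rintro _ ⟨j, hj, rfl⟩
      have hj' : (p : ℕ) + 1 ≤ (j : ℕ) := hj
      have hjl : j ≠ z := by
        intro hjl
        rw [hjl] at hj'
        simp only [hz] at hj'
        omega
      simp [Basis.coord_apply, Basis.repr_self, Finsupp.single_apply,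
        fun h => hjl (Fin.ext h), hjl]
    have : u z ∈ W := h ▸ Submodule.mem_top
    have h1 := hker this
    simp [Basis.coord_apply, Basis.repr_self] at h1

lemma LPaux.LP_symm {A As : Module.End K V} (h : IsLeonardPair A As) :
    IsLeonardPair As A := ⟨h.2, h.1⟩

/-- the matrix entry of `f` at `(i, j)`, `i ≠ j`, vanishes when `b j` is an eigenvector. -/
lemma LPaux.entry_eq_zero_of_evec {b : Basis (Fin (finrank K V)) K V} {f : Module.End K V}
    {j : Fin (finrank K V)} {μ : K} (h : f (b j) = μ • b j)
    {i : Fin (finrank K V)} (hij : i ≠ j) : (LinearMap.toMatrix b b f) i j = 0 := by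
  rw [LinearMap.toMatrix_apply, h, map_smul, Finsupp.smul_apply, Basis.repr_self,
    Finsupp.single_apply, if_neg (fun hh => hij hh.symm), smul_zero]

/-- first basis vector is an eigenvector of an upper-bidiagonal operator. -/
lemma LPaux.upper_first_evec {b : Basis (Fin (finrank K V)) K V} {f : Module.End K V}
    (h : (LinearMap.toMatrix b b f).IsUpperBidiag) (hn : 0 < finrank K V) :
    ∃ μ : K, f (b ⟨0, hn⟩) = μ • b ⟨0, hn⟩ := by
  refine ⟨(LinearMap.toMatrix b b f) ⟨0, hn⟩ ⟨0, hn⟩, ?_⟩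
  rw [LPaux.apply_basis_eq_sum b f ⟨0, hn⟩, Finset.sum_eq_single (⟨0, hn⟩ : Fin (finrank K V))]
  · intro i _ hi
    rw [h i ⟨0, hn⟩ (by
      rintro (h' | h')
      · exact hi h'
      · rw [show ((⟨0, hn⟩ : Fin (finrank K V)) : ℕ) = 0 from rfl] at h'
        omega), zero_smul]
  · intro h'; exact absurd (Finset.mem_univ _) h'

/-- last basis vector is an eigenvector of a lower-bidiagonal operator. -/
lemma LPaux.lower_last_evec {b : Basis (Fin (finrank K V)) K V} {f : Module.End K V}
    (h : (LinearMap.toMatrix b b f).IsLowerBidiag) (hn : 0 < finrank K V) :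
    ∃ μ : K, f (b ⟨finrank K V - 1, by omega⟩) = μ • b ⟨finrank K V - 1, by omega⟩ := by
  set l : Fin (finrank K V) := ⟨finrank K V - 1, by omega⟩ with hl
  refine ⟨(LinearMap.toMatrix b b f) l l, ?_⟩
  rw [LPaux.apply_basis_eq_sum b f l, Finset.sum_eq_single l]
  · intro i _ hi
    rw [h i l (by
      rintro (h' | h')
      · exact hi h'
      · have : (l : ℕ) = finrank K V - 1 := rfl
        have hi2 : (i : ℕ) < finrank K V := i.2
        omega), zero_smul]
  · intro h'; exact absurd (Finset.mem_univ _) h'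

/-- a basis vector of an irreducible-tridiagonal basis is never an eigenvector,
as long as the dimension is at least 2. -/
lemma LPaux.not_evec_tridiag {b : Basis (Fin (finrank K V)) K V} {f : Module.End K V}
    (hT : (LinearMap.toMatrix b b f).IsIrredTridiag) (hn : 2 ≤ finrank K V)
    (j : Fin (finrank K V)) : ¬ ∃ μ : K, f (b j) = μ • b j := by
  rintro ⟨μ, h⟩
  by_cases hj : (j : ℕ) + 1 < finrank K V
  · have hne := hT.2 ⟨(j : ℕ) + 1, hj⟩ j (Or.inr rfl)
    exact hne (LPaux.entry_eq_zero_of_evec h (by intro hh; have := congrArg Fin.val hh; simp at this))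
  · have hj1 : 1 ≤ (j : ℕ) := by have := j.2; omega
    have hlt : (j : ℕ) - 1 < finrank K V := by omega
    have hne := hT.2 ⟨(j : ℕ) - 1, hlt⟩ j (Or.inl (by show (j : ℕ) - 1 + 1 = (j : ℕ); omega))
    exact hne (LPaux.entry_eq_zero_of_evec h
      (by intro hh; have := congrArg Fin.val hh; simp at this; omega))

/-- an eigenvector of an operator whose matrix is diagonal with distinct entries is a
scalar multiple of a basis vector. -/
lemma LPaux.evec_eq_coord {A As : Module.End K V} (hLP : IsLeonardPair A As)
    {b : Basis (Fin (finrank K V)) K V} (hb : IsAStandardBasis A As b)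
    {v : V} {μ : K} (hv : A v = μ • v) (hv0 : v ≠ 0) :
    ∃ (p : Fin (finrank K V)) (α : K), α ≠ 0 ∧ v = α • b p := by
  classical
  set D := LinearMap.toMatrix b b A with hD
  have hrow : ∀ k, D k k * b.repr v k = μ * b.repr v k := by
    intro k
    have h1 := LPaux.eigen_coord b A hv k
    rw [Finset.sum_eq_single k (fun j _ hjk => by rw [hb.1 k j (fun h => hjk h.symm), zero_mul])
      (fun h' => absurd (Finset.mem_univ _) h')] at h1
    exact h1
  have hex : ∃ p, b.repr v p ≠ 0 := by
    by_contra hcon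
    push_neg at hcon
    apply hv0
    have h4 : b.repr v = 0 := by ext j; exact hcon j
    simpa using congrArg b.repr.symm h4
  obtain ⟨p, hp⟩ := hex
  have hμ : D p p = μ := by
    have := hrow p
    rw [mul_eq_mul_right_iff] at this
    rcases this with h | h
    · exact h
    · exact absurd h hp
  refine ⟨p, b.repr v p, hp, ?_⟩
  have hzero : ∀ k, k ≠ p → b.repr v k = 0 := by
    intro k hk
    by_contra hknz
    have hμk : D k k = μ := by
      have := hrow k
      rw [mul_eq_mul_right_iff] at this
      rcases this with h | h
      · exact h
      · exact absurd h hknz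
    exact hk (LPaux.diag_injective hLP hb (show D k k = D p p by rw [hμk, hμ]))
  conv_lhs => rw [← b.sum_repr v]
  rw [Finset.sum_eq_single p (fun k _ hk => by rw [hzero k hk, zero_smul])
    (fun h' => absurd (Finset.mem_univ _) h')]

lemma LPaux.evec_pos_lower {A As : Module.End K V} (hLP : IsLeonardPair A As)
    (u : Basis (Fin (finrank K V)) K V)
    (hA : (LinearMap.toMatrix u u A).IsLowerBidiag)
    (hAs : (LinearMap.toMatrix u u As).IsUpperBidiag)
    {p : Fin (finrank K V)} {μ : K} (h : A (u p) = μ • u p) :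
    (p : ℕ) = finrank K V - 1 := by
  by_contra hcon
  have hp : (p : ℕ) + 1 < finrank K V := by have := p.2; omega
  apply LPaux.split_lower_ne_zero hLP u hA hAs p hp
  apply LPaux.entry_eq_zero_of_evec h
  intro hh
  have h2 : (p : ℕ) + 1 = (p : ℕ) := congrArg Fin.val hh
  omega

lemma LPaux.evec_pos_upper {A As : Module.End K V} (hLP : IsLeonardPair A As)
    (u : Basis (Fin (finrank K V)) K V)
    (hA : (LinearMap.toMatrix u u A).IsLowerBidiag)
    (hAs : (LinearMap.toMatrix u u As).IsUpperBidiag)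
    {p : Fin (finrank K V)} {μ : K} (h : As (u p) = μ • u p) :
    (p : ℕ) = 0 := by
  by_contra hcon
  have h1 : 1 ≤ (p : ℕ) := by omega
  have hq2 : (p : ℕ) - 1 < finrank K V := by have := p.2; omega
  set q : Fin (finrank K V) := ⟨(p : ℕ) - 1, hq2⟩ with hqdef
  have hq : (q : ℕ) + 1 < finrank K V := by
    have h3 : (q : ℕ) = (p : ℕ) - 1 := rfl
    have := p.2
    omega
  apply LPaux.split_upper_ne_zero hLP u hA hAs q hq
  have hpq : (⟨(q : ℕ) + 1, hq⟩ : Fin (finrank K V)) = p := by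
    apply Fin.ext
    show (q : ℕ) + 1 = (p : ℕ)
    have h3 : (q : ℕ) = (p : ℕ) - 1 := rfl
    omega
  rw [hpq]
  apply LPaux.entry_eq_zero_of_evec h
  intro hh
  have h2 : (q : ℕ) = (p : ℕ) := congrArg Fin.val hh
  have h3 : (q : ℕ) = (p : ℕ) - 1 := rfl
  omega


theorem stmt_10 {K V : Type*} [Field K] [CharZero K] [AddCommGroup V] [Module K V]
    [FiniteDimensional K V] (hV : 2 ≤ finrank K V) :
    ¬ ∃ P : Fin 4 → Module.End K V × Module.End K V,
        (∀ i, IsLeonardPair (P i).1 (P i).2) ∧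
        (∀ i j, i ≠ j → P i ≠ P j) ∧
        (∀ i j, i ≠ j → LPAdjacent (P i) (P j)) := by
  classical
  rintro ⟨P, hLP, hdist, hadj⟩
  have hn : 2 ≤ finrank K V := hV
  have hz0 : 0 < finrank K V := by omega
  set z : Fin (finrank K V) := ⟨0, hz0⟩ with hzdef
  set l : Fin (finrank K V) := ⟨finrank K V - 1, by omega⟩ with hldef
  obtain ⟨c, hc⟩ := (hLP 0).1
  obtain ⟨c', hc'⟩ := (hLP 0).2
  set v : V := c z with hvdef
  set w0 : V := c' z with hw0def
  set w1 : V := c' l with hw1def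
  have hvEvec : ∃ μ : K, (P 0).1 v = μ • v := ⟨_, LPaux.diag_apply hc.1 z⟩
  have hw0N : ¬ ∃ μ : K, (P 0).1 w0 = μ • w0 := LPaux.not_evec_tridiag hc'.2 hn z
  have hw1N : ¬ ∃ μ : K, (P 0).1 w1 = μ • w1 := LPaux.not_evec_tridiag hc'.2 hn l
  set op : Bool → Fin 4 → Module.End K V := fun s j => cond s (P j).1 (P j).2 with hopdef
  have hLPop : ∀ (j : Fin 4) (s : Bool), IsLeonardPair (op s j) (op (!s) j) := by
    intro j s
    cases s
    · exact ⟨(hLP j).2, (hLP j).1⟩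
    · exact hLP j
  have hstdop : ∀ (j : Fin 4) (s : Bool) (u : Basis (Fin (finrank K V)) K V),
      IsAStandardBasis (op s j) (op (!s) j) u → IsStandardBasis (P j).1 (P j).2 u := by
    intro j s u h
    cases s
    · exact Or.inr h
    · exact Or.inl h
  have hS : ∀ j : Fin 4, j ≠ 0 → ∃ s : Bool, ∃ μ : K, (op s j) v = μ • v := by
    intro j hj
    have hsplit : IsSplitBasis (P j).1 (P j).2 c :=
      (hadj 0 j (fun h => hj h.symm)).1 c (Or.inl hc)
    rcases hsplit with ⟨hL, hU⟩ | ⟨hU, hL⟩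
    · exact ⟨false, LPaux.upper_first_evec hU hz0⟩
    · exact ⟨true, LPaux.upper_first_evec hU hz0⟩
  have hT : ∀ j : Fin 4, j ≠ 0 → ∃ t : Bool,
      (∃ μ : K, (op t j) w0 = μ • w0) ∧ (∃ μ : K, (op (!t) j) w1 = μ • w1) := by
    intro j hj
    have hsplit : IsSplitBasis (P j).1 (P j).2 c' :=
      (hadj 0 j (fun h => hj h.symm)).1 c' (Or.inr hc')
    rcases hsplit with ⟨hL, hU⟩ | ⟨hU, hL⟩
    · exact ⟨false, LPaux.upper_first_evec hU hz0, LPaux.lower_last_evec hL hz0⟩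
    · exact ⟨true, LPaux.upper_first_evec hU hz0, LPaux.lower_last_evec hL hz0⟩
  choose s hs using hS
  choose t ht using hT
  have core : ∀ (j k : Fin 4) (hj : j ≠ 0) (hk : k ≠ 0), j ≠ k → ∀ (y : V),
      (¬ ∃ μ : K, (P 0).1 y = μ • y) →
      (∃ μ : K, (op (s j hj) j) y = μ • y) →
      (∃ μ : K, (op (s k hk) k) y = μ • y) → False := by
    intro j k hj hk hjk y hyN hyj hyk
    obtain ⟨u, hu⟩ := (hLPop j (s j hj)).1
    have hstd : IsStandardBasis (P j).1 (P j).2 u := hstdop j (s j hj) u hu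
    obtain ⟨μv, hμv⟩ := hs j hj
    obtain ⟨μy, hμy⟩ := hyj
    have hvne : v ≠ 0 := c.ne_zero z
    have hyne : y ≠ 0 := by
      rintro rfl
      exact hyN ⟨0, by simp⟩
    obtain ⟨p, α, hα, hvp⟩ := LPaux.evec_eq_coord (hLPop j (s j hj)) hu hμv hvne
    obtain ⟨q, β, hβ, hyq⟩ := LPaux.evec_eq_coord (hLPop j (s j hj)) hu hμy hyne
    have hup : u p = α⁻¹ • v := by
      rw [hvp, smul_smul, inv_mul_cancel₀ hα, one_smul]
    have huq : u q = β⁻¹ • y := by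
      rw [hyq, smul_smul, inv_mul_cancel₀ hβ, one_smul]
    have hpq : p ≠ q := by
      rintro rfl
      apply hyN
      obtain ⟨μ0, hμ0⟩ := hvEvec
      refine ⟨μ0, ?_⟩
      have hy2 : y = β • α⁻¹ • v := by rw [hyq, hup]
      calc (P 0).1 y = β • α⁻¹ • ((P 0).1 v) := by rw [hy2, map_smul, map_smul]
        _ = β • α⁻¹ • (μ0 • v) := by rw [hμ0]
        _ = μ0 • y := by rw [hy2, smul_comm α⁻¹ μ0, smul_comm β μ0]
    obtain ⟨μ2, hμ2⟩ := hs k hk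
    obtain ⟨μ3, hμ3⟩ := hyk
    have hupE : (op (s k hk) k) (u p) = μ2 • u p := by
      rw [hup, map_smul, hμ2, smul_comm]
    have huqE : (op (s k hk) k) (u q) = μ3 • u q := by
      rw [huq, map_smul, hμ3, smul_comm]
    have hsp : IsSplitBasis (P k).1 (P k).2 u := (hadj j k hjk).1 u hstd
    rcases Bool.eq_false_or_eq_true (s k hk) with hsk | hsk <;>
      rw [hsk] at hupE huqE <;>
      simp only [hopdef, cond_true, cond_false] at hupE huqE <;>
      rcases hsp with ⟨hL, hU⟩ | ⟨hU, hL⟩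
    · have hp0 : (p : ℕ) = finrank K V - 1 :=
        LPaux.evec_pos_lower (hLP k) u hL hU hupE
      have hq0 : (q : ℕ) = finrank K V - 1 :=
        LPaux.evec_pos_lower (hLP k) u hL hU huqE
      exact hpq (Fin.ext (by rw [hp0, hq0]))
    · have hp0 : (p : ℕ) = 0 :=
        LPaux.evec_pos_upper (LPaux.LP_symm (hLP k)) u hL hU hupE
      have hq0 : (q : ℕ) = 0 :=
        LPaux.evec_pos_upper (LPaux.LP_symm (hLP k)) u hL hU huqE
      exact hpq (Fin.ext (by rw [hp0, hq0]))
    · have hp0 : (p : ℕ) = 0 := LPaux.evec_pos_upper (hLP k) u hL hU hupE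
      have hq0 : (q : ℕ) = 0 := LPaux.evec_pos_upper (hLP k) u hL hU huqE
      exact hpq (Fin.ext (by rw [hp0, hq0]))
    · have hp0 : (p : ℕ) = finrank K V - 1 :=
        LPaux.evec_pos_lower (LPaux.LP_symm (hLP k)) u hL hU hupE
      have hq0 : (q : ℕ) = finrank K V - 1 :=
        LPaux.evec_pos_lower (LPaux.LP_symm (hLP k)) u hL hU huqE
      exact hpq (Fin.ext (by rw [hp0, hq0]))
  have main : ∀ (j k : Fin 4) (hj : j ≠ 0) (hk : k ≠ 0), j ≠ k →
      (s j hj == t j hj) = (s k hk == t k hk) → False := by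
    intro j k hj hk hjk he
    by_cases hejj : s j hj = t j hj
    · have hekk : s k hk = t k hk := by
        have h1 : (s j hj == t j hj) = true := beq_iff_eq.mpr hejj
        have h2 : (s k hk == t k hk) = true := by rw [← he]; exact h1
        exact beq_iff_eq.mp h2
      refine core j k hj hk hjk w0 hw0N ?_ ?_
      · have h3 := (ht j hj).1
        rwa [← hejj] at h3
      · have h3 := (ht k hk).1
        rwa [← hekk] at h3
    · have hekk : ¬ s k hk = t k hk := by
        intro hcon
        have h1 : (s k hk == t k hk) = true := beq_iff_eq.mpr hcon
        rw [← he] at h1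
        exact hejj (beq_iff_eq.mp h1)
      have hsj2 : s j hj = !(t j hj) := Bool.eq_not_iff.mpr hejj
      have hsk2 : s k hk = !(t k hk) := Bool.eq_not_iff.mpr hekk
      refine core j k hj hk hjk w1 hw1N ?_ ?_
      · rw [hsj2]
        exact (ht j hj).2
      · rw [hsk2]
        exact (ht k hk).2
  have h1ne : (1 : Fin 4) ≠ 0 := by decide
  have h2ne : (2 : Fin 4) ≠ 0 := by decide
  have h3ne : (3 : Fin 4) ≠ 0 := by decide
  have tri : ∀ a b c : Bool, a = b ∨ a = c ∨ b = c := by decide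
  rcases tri (s 1 h1ne == t 1 h1ne) (s 2 h2ne == t 2 h2ne) (s 3 h3ne == t 3 h3ne)
    with he | he | he
  · exact main 1 2 h1ne h2ne (by decide) he
  · exact main 1 3 h1ne h3ne (by decide) he
  · exact main 2 3 h2ne h3ne (by decide) he
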